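/- Let x be i.i.d. Rademacher random variables, u a unit vector in ℝ^n, and X = ⟨u,x⟩. Then E[exp((3/8) X²)] ≤ 2; consequently the sub-gaussian norm ‖X‖_{ψ₂} = inf{t > 0 : E exp(X²/t²) ≤ 2} is at most √(8/3). -/

import Mathlib

open MeasureTheory ProbabilityTheory

section helpers
open Real

lemma aux_gauss_int (s : ℝ) : Integrable (fun g : ℝ => Real.exp (s * g - g^2/2)) := by
  have h : ∀ g : ℝ, s * g - g^2/2 = -(1/2) * (g - s)^2 + s^2/2 := by intro g; ring
  simp_rw [h, Real.exp_add]
  exact ((integrable_exp_neg_mul_sq (by norm_num : (0:ℝ) < 1/2)).comp_sub_right s).mul_const _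

lemma aux_gauss (s : ℝ) :
    ∫ g : ℝ, Real.exp (s * g - g^2/2) = Real.sqrt (2*Real.pi) * Real.exp (s^2/2) := by
  have h : ∀ g : ℝ, s * g - g^2/2 = -(1/2) * (g - s)^2 + s^2/2 := by intro g; ring
  simp_rw [h, Real.exp_add]
  rw [integral_mul_const, integral_sub_right_eq_self (μ := volume)
    (fun g => Real.exp (-(1/2) * g^2)) s, integral_gaussian]
  norm_num [Real.sqrt_div_self, mul_comm]

variable {Ω : Type*} [MeasurableSpace Ω] {μ : Measure Ω} [IsProbabilityMeasure μ]

lemma rad_ae {Y : Ω → ℝ} (hm : Measurable Y) (h1 : μ {ω | Y ω = 1} = 1/2)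
    (hm1 : μ {ω | Y ω = -1} = 1/2) : ∀ᵐ ω ∂μ, Y ω = 1 ∨ Y ω = -1 := by
  have hA : MeasurableSet {ω | Y ω = 1} := hm (measurableSet_singleton 1)
  have hB : MeasurableSet {ω | Y ω = -1} := hm (measurableSet_singleton (-1))
  have hd : Disjoint {ω | Y ω = 1} {ω | Y ω = -1} := by
    rw [Set.disjoint_left]; intro ω hω hω'
    simp only [Set.mem_setOf_eq] at hω hω'; rw [hω] at hω'; norm_num at hω'
  have hun : μ ({ω | Y ω = 1} ∪ {ω | Y ω = -1}) = 1 := by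
    rw [measure_union hd hB, h1, hm1]
    rw [ENNReal.div_add_div_same]
    norm_num
    exact ENNReal.div_self (two_ne_zero) (ENNReal.ofNat_ne_top)
  have hc : μ ({ω | Y ω = 1} ∪ {ω | Y ω = -1})ᶜ = 0 := by
    rw [measure_compl (hA.union hB) (measure_ne_top _ _), hun, measure_univ, tsub_self]
  rw [ae_iff]
  have he : {a | ¬(Y a = 1 ∨ Y a = -1)} = ({ω | Y ω = 1} ∪ {ω | Y ω = -1})ᶜ := by
    ext ω; simp [not_or]
  rw [he]; exact hc

lemma rad_int {Y : Ω → ℝ} (hm : Measurable Y) (h1 : μ {ω | Y ω = 1} = 1/2)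
    (hm1 : μ {ω | Y ω = -1} = 1/2) (t : ℝ) :
    Integrable (fun ω => Real.exp (t * Y ω)) μ := by
  refine Integrable.mono' (integrable_const (Real.exp |t|))
    ((hm.const_mul t).exp.aestronglyMeasurable) ?_
  filter_upwards [rad_ae hm h1 hm1] with ω hω
  rw [Real.norm_eq_abs, abs_of_pos (Real.exp_pos _)]
  rcases hω with h | h <;> rw [h]
  · simpa using Real.exp_le_exp.2 (le_abs_self t)
  · simpa using Real.exp_le_exp.2 (neg_le_abs t)

lemma rad_mgf {Y : Ω → ℝ} (hm : Measurable Y) (h1 : μ {ω | Y ω = 1} = 1/2)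
    (hm1 : μ {ω | Y ω = -1} = 1/2) (t : ℝ) :
    ∫ ω, Real.exp (t * Y ω) ∂μ = Real.cosh t := by
  have hA : MeasurableSet {ω | Y ω = 1} := hm (measurableSet_singleton 1)
  have hB : MeasurableSet {ω | Y ω = -1} := hm (measurableSet_singleton (-1))
  have hf : (fun ω => Real.exp (t * Y ω)) =ᵐ[μ]
      fun ω => {ω | Y ω = 1}.indicator (fun _ => Real.exp t) ω
        + {ω | Y ω = -1}.indicator (fun _ => Real.exp (-t)) ω := by
    filter_upwards [rad_ae hm h1 hm1] with ω hω
    rcases hω with h | h <;>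
    · simp only [Set.indicator_apply, Set.mem_setOf_eq, h]
      norm_num
  rw [integral_congr_ae hf, integral_add ((integrable_const _).indicator hA)
    ((integrable_const _).indicator hB), integral_indicator_const _ hA,
    integral_indicator_const _ hB, measureReal_def, measureReal_def, h1, hm1, Real.cosh_eq]
  simp [ENNReal.toReal_div]
  ring

end helpers

/-- Let `x` be i.i.d. Rademacher, `u` a unit vector, `X = ⟨u,x⟩`. Then
`E[exp ((3/8) X²)] ≤ 2`, and consequently the sub-gaussian norm
`‖X‖_{ψ₂} = inf {t > 0 : E exp (X²/t²) ≤ 2}` is at most `√(8/3)`. -/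
theorem rademacher_subgaussian_norm {Ω : Type*} [MeasurableSpace Ω] (μ : Measure Ω)
    [IsProbabilityMeasure μ] {n : ℕ} (X : Fin n → Ω → ℝ)
    (hmeas : ∀ i, Measurable (X i))
    (hindep : iIndepFun X μ)
    (hlaw1 : ∀ i, μ {ω | X i ω = 1} = 1 / 2)
    (hlawm1 : ∀ i, μ {ω | X i ω = -1} = 1 / 2)
    (u : Fin n → ℝ) (hu : ∑ i, u i ^ 2 = 1) :
    (∫ ω, Real.exp ((3 / 8) * (∑ i, u i * X i ω) ^ 2) ∂μ ≤ 2) ∧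
      sInf {t : ℝ | 0 < t ∧
          ∫ ω, Real.exp ((∑ i, u i * X i ω) ^ 2 / t ^ 2) ∂μ ≤ 2} ≤
        Real.sqrt (8 / 3) := by
  set S : Ω → ℝ := fun ω => ∑ i, u i * X i ω with hSdef
  have hSmeas : Measurable S := Finset.measurable_sum _ fun i _ => (hmeas i).const_mul (u i)
  have hYindep : iIndepFun (fun i ω => u i * X i ω) μ :=
    hindep.comp (fun i x => u i * x) (fun i => measurable_const_mul _)
  have hYmeas : ∀ i, Measurable (fun ω => u i * X i ω) := fun i => (hmeas i).const_mul _
  have hint1 : ∀ (t : ℝ) (i : Fin n),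
      Integrable (fun ω => Real.exp (t * (u i * X i ω))) μ := by
    intro t i
    have := rad_int (hmeas i) (hlaw1 i) (hlawm1 i) (t * u i)
    simpa [mul_assoc] using this
  have hSint : ∀ t : ℝ, Integrable (fun ω => Real.exp (t * S ω)) μ := by
    intro t
    have := iIndepFun.integrable_exp_mul_sum hYindep hYmeas
      (s := Finset.univ) (fun i _ => hint1 t i)
    simpa [hSdef, Finset.sum_apply] using this
  have key : ∀ t : ℝ, ∫ ω, Real.exp (t * S ω) ∂μ ≤ Real.exp (t^2/2) := by
    intro t
    have hmgf : mgf (∑ i, fun ω => u i * X i ω) μ t = ∏ i, Real.cosh (t * u i) := by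
      rw [iIndepFun.mgf_sum hYindep hYmeas Finset.univ]
      refine Finset.prod_congr rfl fun i _ => ?_
      have h := rad_mgf (hmeas i) (hlaw1 i) (hlawm1 i) (t * u i)
      rw [mgf, ← h]
      congr 1; funext ω; ring_nf
    have h1 : ∫ ω, Real.exp (t * S ω) ∂μ = mgf (∑ i, fun ω => u i * X i ω) μ t := by
      rw [mgf]; congr 1; funext ω; simp [hSdef, Finset.sum_apply]
    rw [h1, hmgf]
    calc ∏ i, Real.cosh (t * u i) ≤ ∏ i, Real.exp ((t * u i)^2/2) :=
          Finset.prod_le_prod (fun i _ => (Real.cosh_pos _).le)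
            (fun i _ => Real.cosh_le_exp_half_sq _)
      _ = Real.exp (∑ i, (t * u i)^2/2) := (Real.exp_sum _ _).symm
      _ = Real.exp (t^2/2) := by
          congr 1
          simp_rw [mul_pow]
          rw [← Finset.sum_div, ← Finset.mul_sum, hu]; ring
  set a : ℝ := Real.sqrt 3 / 2 with hadef
  have ha2 : a^2 = 3/4 := by
    rw [hadef, div_pow, Real.sq_sqrt (by norm_num : (3:ℝ) ≥ 0)]; norm_num
  have hsqrt_pos : (0:ℝ) < Real.sqrt (2*Real.pi) := Real.sqrt_pos.2 (by positivity)
  have c0 : (0:ℝ) ≤ (Real.sqrt (2*Real.pi))⁻¹ := by positivity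
  have hpt : ∀ ω, Real.exp ((3/8) * S ω^2)
      = (Real.sqrt (2*Real.pi))⁻¹ * ∫ g, Real.exp (a * S ω * g - g^2/2) := by
    intro ω
    rw [aux_gauss (a * S ω), ← mul_assoc, inv_mul_cancel₀ hsqrt_pos.ne', one_mul]
    congr 1
    rw [mul_pow, ha2]; ring
  have hF : AEMeasurable (Function.uncurry fun (ω : Ω) (g : ℝ) =>
      ENNReal.ofReal (Real.exp (a * S ω * g - g^2/2))) (μ.prod volume) := by
    apply Measurable.aemeasurable
    have : Measurable fun p : Ω × ℝ => a * S p.1 * p.2 - p.2^2/2 :=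
      (((hSmeas.comp measurable_fst).const_mul a).mul measurable_snd).sub
        ((measurable_snd.pow_const 2).div_const 2)
    exact this.exp.ennreal_ofReal
  have hinner : ∀ g : ℝ, ∫⁻ ω, ENNReal.ofReal (Real.exp (a * S ω * g - g^2/2)) ∂μ
      ≤ ENNReal.ofReal (Real.exp (-(1/8) * g^2)) := by
    intro g
    have hre : ∀ ω, Real.exp (a * S ω * g - g^2/2)
        = Real.exp ((a*g) * S ω) * Real.exp (-(g^2/2)) := by
      intro ω; rw [← Real.exp_add]; ring_nf
    calc ∫⁻ ω, ENNReal.ofReal (Real.exp (a * S ω * g - g^2/2)) ∂μ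
        = (∫⁻ ω, ENNReal.ofReal (Real.exp ((a*g) * S ω)) ∂μ)
            * ENNReal.ofReal (Real.exp (-(g^2/2))) := by
          simp_rw [hre, ENNReal.ofReal_mul (Real.exp_nonneg _)]
          exact lintegral_mul_const' _ _ ENNReal.ofReal_ne_top
      _ = ENNReal.ofReal (∫ ω, Real.exp ((a*g) * S ω) ∂μ)
            * ENNReal.ofReal (Real.exp (-(g^2/2))) := by
          rw [← ofReal_integral_eq_lintegral_ofReal (hSint (a*g))
            (ae_of_all _ fun ω => Real.exp_nonneg _)]
      _ ≤ ENNReal.ofReal (Real.exp ((a*g)^2/2)) * ENNReal.ofReal (Real.exp (-(g^2/2))) :=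
          mul_le_mul_left (ENNReal.ofReal_le_ofReal (key (a*g))) _
      _ = ENNReal.ofReal (Real.exp (-(1/8) * g^2)) := by
          rw [← ENNReal.ofReal_mul (Real.exp_nonneg _), ← Real.exp_add]
          congr 2
          rw [mul_pow, ha2]; ring
  have hL : ∫⁻ ω, ENNReal.ofReal (Real.exp ((3/8) * S ω^2)) ∂μ ≤ ENNReal.ofReal 2 := by
    calc ∫⁻ ω, ENNReal.ofReal (Real.exp ((3/8) * S ω^2)) ∂μ
        = ∫⁻ ω, ENNReal.ofReal ((Real.sqrt (2*Real.pi))⁻¹)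
            * ∫⁻ g, ENNReal.ofReal (Real.exp (a * S ω * g - g^2/2)) ∂volume ∂μ := by
          refine lintegral_congr fun ω => ?_
          rw [hpt ω, ENNReal.ofReal_mul c0, ofReal_integral_eq_lintegral_ofReal
            (aux_gauss_int _) (ae_of_all _ fun g => Real.exp_nonneg _)]
      _ = ENNReal.ofReal ((Real.sqrt (2*Real.pi))⁻¹)
            * ∫⁻ ω, ∫⁻ g, ENNReal.ofReal (Real.exp (a * S ω * g - g^2/2)) ∂volume ∂μ :=
          lintegral_const_mul' _ _ ENNReal.ofReal_ne_top
      _ = ENNReal.ofReal ((Real.sqrt (2*Real.pi))⁻¹)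
            * ∫⁻ g, ∫⁻ ω, ENNReal.ofReal (Real.exp (a * S ω * g - g^2/2)) ∂μ ∂volume := by
          rw [lintegral_lintegral_swap hF]
      _ ≤ ENNReal.ofReal ((Real.sqrt (2*Real.pi))⁻¹)
            * ∫⁻ g, ENNReal.ofReal (Real.exp (-(1/8) * g^2)) ∂volume :=
          mul_le_mul_right (lintegral_mono fun g => hinner g) _
      _ = ENNReal.ofReal ((Real.sqrt (2*Real.pi))⁻¹ * Real.sqrt (Real.pi / (1/8))) := by
          rw [← ofReal_integral_eq_lintegral_ofReal
            (integrable_exp_neg_mul_sq (by norm_num : (0:ℝ) < 1/8))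
            (ae_of_all _ fun g => Real.exp_nonneg _), integral_gaussian,
            ← ENNReal.ofReal_mul c0]
      _ = ENNReal.ofReal 2 := by
          congr 1
          have h8 : Real.pi / (1/8) = 4 * (2 * Real.pi) := by ring
          rw [h8, Real.sqrt_mul (by norm_num : (0:ℝ) ≤ 4),
            show Real.sqrt 4 = 2 by
              rw [show (4:ℝ) = 2^2 by norm_num, Real.sqrt_sq (by norm_num : (0:ℝ) ≤ 2)]]
          field_simp
  have hnn : ∀ ω, 0 ≤ Real.exp ((3/8) * S ω^2) := fun ω => (Real.exp_pos _).le
  have hm : Measurable fun ω => Real.exp ((3/8) * S ω^2) :=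
    ((hSmeas.pow_const 2).const_mul _).exp
  have h1 : ∫ ω, Real.exp ((3/8) * S ω^2) ∂μ ≤ 2 := by
    rw [integral_eq_lintegral_of_nonneg_ae (ae_of_all _ hnn) hm.aestronglyMeasurable]
    calc (∫⁻ ω, ENNReal.ofReal (Real.exp ((3/8) * S ω^2)) ∂μ).toReal
        ≤ (ENNReal.ofReal 2).toReal :=
          ENNReal.toReal_mono ENNReal.ofReal_ne_top hL
      _ = 2 := ENNReal.toReal_ofReal (by norm_num)
  constructor
  · exact h1
  · have hT : (0:ℝ) < Real.sqrt (8/3) := Real.sqrt_pos.2 (by norm_num)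
    have hT2 : Real.sqrt (8/3) ^ 2 = 8/3 := Real.sq_sqrt (by norm_num)
    refine csInf_le ⟨0, fun t ht => ht.1.le⟩ ⟨hT, ?_⟩
    have he : ∀ ω, S ω^2 / Real.sqrt (8/3)^2 = (3/8) * S ω^2 := by
      intro ω; rw [hT2]; ring
    show ∫ ω, Real.exp (S ω ^ 2 / Real.sqrt (8/3) ^ 2) ∂μ ≤ 2
    simp_rw [he]
    exact h1
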